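/- Let λ be a nonempty partition, let V^λ be the ℂ-vector space with basis the set of boxes of the Young diagram D_λ, graded by residue, and define B_1^λ(b_{j,k}) = b_{j+1,k} and B_{−1}^λ(b_{j,k}) = b_{j,k+1} (interpreted as 0 when the target box is not in D_λ), and ṽ^λ = b_{0,0}. Then B_1^λ B_{−1}^λ = B_{−1}^λ B_1^λ, and the triple is stable: every ℂ-subspace S ⊆ V^λ with B_1^λ(S) ⊆ S, B_{−1}^λ(S) ⊆ S and b_{0,0} ∈ S equals V^λ. -/

import Mathlib

/-- A partition: a non-increasing, eventually-zero sequence of non-negative integers.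
`part k` is the `(k+1)`-st part `λ_{k+1}`. -/
structure PartitionSeq : Type where
  part : ℕ → ℕ
  mono : ∀ k, part (k + 1) ≤ part k
  ev_zero : ∃ N : ℕ, ∀ k, N ≤ k → part k = 0

namespace PartitionSeq

/-- The Young diagram of a partition: the box `b = (j, k)` in column `j ≥ 0` and row
`k ≥ 0` belongs to the diagram iff `j < λ_{k+1}`. -/
def diagram (lam : PartitionSeq) : Set (ℕ × ℕ) := {b | b.1 < lam.part b.2}

/-- The size `|λ| = Σ_i λ_i` of a partition. -/
noncomputable def size (lam : PartitionSeq) : ℕ := ∑ᶠ k : ℕ, lam.part k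

end PartitionSeq

/-- The residue `j - k` of the box `b = (j, k)`. -/
def boxResidue (b : ℕ × ℕ) : ℤ := (b.1 : ℤ) - (b.2 : ℤ)

/-- `v_i(λ)`: the number of boxes of the Young diagram of `λ` of residue `i`. -/
noncomputable def boxCount (lam : PartitionSeq) (i : ℤ) : ℕ :=
  {b ∈ lam.diagram | boxResidue b = i}.ncard

/-- The type of boxes of the Young diagram of `lam`. -/
def BoxOf (lam : PartitionSeq) : Type := {b : ℕ × ℕ // b.1 < lam.part b.2}

/-- `V^λ`: the free `ℂ`-vector space on the boxes of the Young diagram of `lam`,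
graded by residue. -/
abbrev YoungSpace (lam : PartitionSeq) : Type := BoxOf lam →₀ ℂ

/-- `B_1^λ`: the degree `+1` endomorphism `b_{j,k} ↦ b_{j+1,k}` (and `0` if the target
box is not in the diagram). -/
noncomputable def YB1 (lam : PartitionSeq) : YoungSpace lam →ₗ[ℂ] YoungSpace lam :=
  Finsupp.lift (YoungSpace lam) ℂ (BoxOf lam) fun b =>
    if h : b.1.1 + 1 < lam.part b.1.2 then Finsupp.single ⟨(b.1.1 + 1, b.1.2), h⟩ 1 else 0

/-- `B_{-1}^λ`: the degree `-1` endomorphism `b_{j,k} ↦ b_{j,k+1}` (and `0` if the target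
box is not in the diagram). -/
noncomputable def YBm1 (lam : PartitionSeq) : YoungSpace lam →ₗ[ℂ] YoungSpace lam :=
  Finsupp.lift (YoungSpace lam) ℂ (BoxOf lam) fun b =>
    if h : b.1.1 < lam.part (b.1.2 + 1) then Finsupp.single ⟨(b.1.1, b.1.2 + 1), h⟩ 1 else 0

/-- for a nonempty partition `λ`, the operators `B_1^λ` and `B_{-1}^λ` on
`V^λ` commute, and the triple `(B_1^λ, B_{-1}^λ, b_{0,0})` is stable: every subspace of
`V^λ` invariant under both operators and containing `b_{0,0}` is all of `V^λ`. -/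
lemma YB1_single (lam : PartitionSeq) (b : BoxOf lam) :
    YB1 lam (Finsupp.single b 1) =
    if h : b.1.1 + 1 < lam.part b.1.2 then Finsupp.single ⟨(b.1.1 + 1, b.1.2), h⟩ 1 else 0 := by
  simp [YB1]

lemma YBm1_single (lam : PartitionSeq) (b : BoxOf lam) :
    YBm1 lam (Finsupp.single b 1) =
    if h : b.1.1 < lam.part (b.1.2 + 1) then Finsupp.single ⟨(b.1.1, b.1.2 + 1), h⟩ 1 else 0 := by
  simp [YBm1]

theorem young_triple_stable (lam : PartitionSeq) (h0 : 0 < lam.part 0) :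
    YB1 lam ∘ₗ YBm1 lam = YBm1 lam ∘ₗ YB1 lam ∧
    (∀ S : Submodule ℂ (YoungSpace lam),
      (∀ x ∈ S, YB1 lam x ∈ S) → (∀ x ∈ S, YBm1 lam x ∈ S) →
      Finsupp.single (⟨(0, 0), h0⟩ : BoxOf lam) 1 ∈ S → S = ⊤) := by
  constructor
  · apply Finsupp.lhom_ext
    rintro ⟨⟨j, k⟩, hb⟩ c
    have hc : (Finsupp.single (⟨(j, k), hb⟩ : BoxOf lam) c : YoungSpace lam)
        = c • Finsupp.single (⟨(j, k), hb⟩ : BoxOf lam) 1 := by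
      exact (Finsupp.smul_single_one _ c).symm
    simp only [hc, LinearMap.comp_apply, map_smul]
    erw [map_smul, map_smul, map_smul, map_smul]
    congr 1
    by_cases h : j + 1 < lam.part (k + 1)
    · have h1 : j < lam.part (k + 1) := Nat.lt_of_succ_lt h
      have h2 : j + 1 < lam.part k := lt_of_lt_of_le h (lam.mono k)
      erw [YBm1_single lam ⟨(j, k), hb⟩, YB1_single lam ⟨(j, k), hb⟩]; rw [dif_pos h1, dif_pos h2]; erw [YB1_single lam ⟨(j, k + 1), h1⟩, YBm1_single lam ⟨(j + 1, k), h2⟩]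
    · erw [YBm1_single lam ⟨(j, k), hb⟩, YB1_single lam ⟨(j, k), hb⟩]
      by_cases h1 : j < lam.part (k + 1)
      · rw [dif_pos h1]; erw [YB1_single lam ⟨(j, k + 1), h1⟩]
        simp only [dif_neg h]
        by_cases h2 : j + 1 < lam.part k
        · rw [dif_pos h2]; erw [YBm1_single lam ⟨(j + 1, k), h2⟩]; simp only [dif_neg h]
        · rw [dif_neg h2, map_zero]
      · rw [dif_neg h1, map_zero]
        by_cases h2 : j + 1 < lam.part k
        · rw [dif_pos h2]; erw [YBm1_single lam ⟨(j + 1, k), h2⟩]; simp only [dif_neg h]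
        · rw [dif_neg h2, map_zero]
  · intro S hS1 hSm1 h00
    have key : ∀ n : ℕ, ∀ b : BoxOf lam, b.1.1 + b.1.2 = n → Finsupp.single b 1 ∈ S := by
      intro n
      induction n with
      | zero =>
        intro b hb
        obtain ⟨⟨j, k⟩, h⟩ := b
        simp only at hb
        obtain ⟨rfl, rfl⟩ := Nat.add_eq_zero.mp hb
        exact h00
      | succ n ih =>
        rintro ⟨⟨j, k⟩, h⟩ hb
        match j, k with
        | j + 1, k =>
          have h' : j < lam.part k := Nat.lt_of_succ_lt h
          have hmem := hS1 _ (ih ⟨(j, k), h'⟩ (by simp at hb ⊢; omega))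
          erw [YB1_single, dif_pos h] at hmem; exact hmem
        | 0, k + 1 =>
          have h' : (0 : ℕ) < lam.part k := lt_of_lt_of_le h (lam.mono k)
          have hmem := hSm1 _ (ih ⟨(0, k), h'⟩ (by simp at hb ⊢; omega))
          erw [YBm1_single, dif_pos h] at hmem; exact hmem
        | 0, 0 => exact h00
    have hall : ∀ x : YoungSpace lam, x ∈ S := by
      intro x
      induction x using Finsupp.induction_linear with
      | zero => exact S.zero_mem
      | add f g hf hg => exact S.add_mem hf hg
      | single a c =>
        have := S.smul_mem c (key (a.1.1 + a.1.2) a rfl)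
        rwa [Finsupp.smul_single, smul_eq_mul, mul_one] at this
    rw [eq_top_iff]
    exact fun x _ => hall x
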